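/- Let n ≥ 2 and let Λ = Φ_{n−1} ∘ Φ_{n−2} ∘ ⋯ ∘ Φ_1 : T_n → T_n. Then Λ(e_1) = −Σ_{j=1}^{n−1} q^{n−2−j} e_j, and Λ(e_i) = q^{n−2} e_{i−1} for every i with 2 ≤ i ≤ n−1. -/

import Mathlib

open scoped BigOperators

set_option maxHeartbeats 1000000
set_option synthInstance.maxHeartbeats 400000

noncomputable section

/-- The ground field `K = ℂ(q)`. -/
abbrev K : Type := RatFunc ℂ

/-- The variable `q` of `K = ℂ(q)`. -/
def q : K := RatFunc.X

/-- `T n` models the `n`-th tensor power of the vector representation of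
`U_q(gl(1|1))`, as functions on binary strings of length `n`. -/
abbrev T (n : ℕ) : Type := (Fin n → Fin 2) → K

/-- The standard basis vector `v_α` of `T n`. -/
def v (n : ℕ) (α : Fin n → Fin 2) : T n := fun β => if β = α then 1 else 0

/-- `v₀^{⊗ n}`, the basis vector of the all-zeroes string. -/
def v0 (n : ℕ) : T n := v n (fun _ => 0)

/-- `w n i` is the basis vector whose string has a single `1` in (1-indexed) position `i`. -/
def w (n i : ℕ) : T n := v n (fun j => if (j : ℕ) + 1 = i then 1 else 0)

/-- `e i = -w_i + q⁻¹ w_{i+1}`. -/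
def e (n i : ℕ) : T n := -(w n i) + q⁻¹ • w n (i + 1)

/-- The `R`-matrix on a pair of strands: entry `Rmat out inp`. -/
def Rmat : Fin 2 × Fin 2 → Fin 2 × Fin 2 → K := fun out inp =>
  if inp = (0, 0) then (if out = (0, 0) then q else 0)
  else if inp = (1, 0) then (if out = (0, 1) then 1 else 0)
  else if inp = (0, 1) then
    (if out = (1, 0) then 1 else if out = (0, 1) then q - q⁻¹ else 0)
  else (if out = (1, 1) then -q⁻¹ else 0)

/-- The `R`-matrix acting at positions `i`, `j` (0-indexed) of `T n`. -/
def PhiAux (n : ℕ) (i j : Fin n) : T n →ₗ[K] T n where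
  toFun f := fun β => ∑ p : Fin 2 × Fin 2,
    Rmat (β i, β j) p * f (Function.update (Function.update β i p.1) j p.2)
  map_add' f g := by
    funext β
    try dsimp only
    simp only [Pi.add_apply]
    rw [← Finset.sum_add_distrib]
    exact Finset.sum_congr rfl fun p _ => by simp [mul_add]
  map_smul' c f := by
    funext β
    try dsimp only
    simp only [Pi.smul_apply, smul_eq_mul, RingHom.id_apply]
    rw [Finset.mul_sum]
    exact Finset.sum_congr rfl fun p _ => by ring

/-- `Phi n t` is the map induced by the braid generator `σ_t` (with `1 ≤ t ≤ n-1`),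
acting through the `R`-matrix at (1-indexed) positions `(t, t+1)`. -/
def Phi (n t : ℕ) : T n →ₗ[K] T n :=
  if h : 0 < t ∧ t < n then PhiAux n ⟨t - 1, by omega⟩ ⟨t, h.2⟩ else 0

/-- The action of `E` on `T n`. -/
def En (n : ℕ) : T n →ₗ[K] T n where
  toFun f := fun β => ∑ i : Fin n,
    if β i = 0 then
      ((-1 : K) ^ (Finset.univ.filter (fun j : Fin n => j < i ∧ β j = 1)).card
        * q⁻¹ ^ (n - 1 - (i : ℕ))) * f (Function.update β i 1)
    else 0
  map_add' f g := by
    funext β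
    try dsimp only
    simp only [Pi.add_apply]
    rw [← Finset.sum_add_distrib]
    refine Finset.sum_congr rfl fun i _ => ?_
    by_cases h : β i = 0 <;> simp [h, mul_add]
  map_smul' c f := by
    funext β
    try dsimp only
    simp only [Pi.smul_apply, smul_eq_mul, RingHom.id_apply]
    rw [Finset.mul_sum]
    refine Finset.sum_congr rfl fun i _ => ?_
    by_cases h : β i = 0 <;> simp [h] <;> ring

/-- The action of `F` on `T n`. -/
def Fn (n : ℕ) : T n →ₗ[K] T n where
  toFun f := fun β => ∑ i : Fin n,
    if β i = 1 then
      ((-1 : K) ^ (Finset.univ.filter (fun j : Fin n => j < i ∧ β j = 1)).card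
        * q ^ (i : ℕ)) * f (Function.update β i 0)
    else 0
  map_add' f g := by
    funext β
    try dsimp only
    simp only [Pi.add_apply]
    rw [← Finset.sum_add_distrib]
    refine Finset.sum_congr rfl fun i _ => ?_
    by_cases h : β i = 1 <;> simp [h, mul_add]
  map_smul' c f := by
    funext β
    try dsimp only
    simp only [Pi.smul_apply, smul_eq_mul, RingHom.id_apply]
    rw [Finset.mul_sum]
    refine Finset.sum_congr rfl fun i _ => ?_
    by_cases h : β i = 1 <;> simp [h] <;> ring

/-- The number of `1`s in a binary string. -/
def wt {n : ℕ} (α : Fin n → Fin 2) : ℕ := (Finset.univ.filter (fun i => α i = 1)).card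

/-- `Tk n k` is the span of the basis vectors with exactly `k` entries equal to `1`. -/
def Tk (n k : ℕ) : Submodule K (T n) :=
  Submodule.span K {f : T n | ∃ α, wt α = k ∧ f = v n α}

/-- `Hk n k` is the space of highest weight vectors of weight `(n-k)ε₁ + kε₂`. -/
def Hk (n k : ℕ) : Submodule K (T n) := LinearMap.ker (En n) ⊓ Tk n k

/-- The bilinear product `m` on `T n`. -/
def mul2 (n : ℕ) (f g : T n) : T n := fun γ =>
  ∑ α : Fin n → Fin 2,
    if (∀ i, α i = 1 → γ i = 1) then
      ((-1 : K) ^ (∑ p ∈ Finset.univ.filter (fun p : Fin n × Fin n => p.1 < p.2),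
          (((fun i => if α i = 1 then 0 else γ i) p.1 : Fin 2) : ℕ) * ((α p.2 : Fin 2) : ℕ)))
        * f α * g (fun i => if α i = 1 then 0 else γ i)
    else 0

/-- The left-iterated product `Ψ(u_1, …, u_k) = m(…m(m(u_1,u_2),u_3)…,u_k)`. -/
def Psi (n : ℕ) : (k : ℕ) → (Fin k → T n) → T n
  | 0, _ => v0 n
  | 1, u => u 0
  | (k + 2), u => mul2 n (Psi n (k + 1) (fun i => u i.castSucc)) (u (Fin.last (k + 1)))

/-- Concatenation (tensor product) `T a ⊗ T b → T (a + b)`. -/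
def conc {a b : ℕ} (f : T a) (g : T b) : T (a + b) := fun γ =>
  f (fun i => γ (Fin.castAdd b i)) * g (fun i => γ (Fin.natAdd a i))

/-- Identification `T a ≃ T b` for `a = b`. -/
def castT {a b : ℕ} (h : a = b) (f : T a) : T b := fun γ => f (fun i => γ (Fin.cast h i))

/-- The block vector `Θ_b = Σ_{r=0}^{b-1} (-1)^r q^{-(b-1-r)} v_{β(r)}`. -/
def Theta (b : ℕ) : T b :=
  ∑ r : Fin b, ((-1 : K) ^ (r : ℕ) * q⁻¹ ^ (b - 1 - (r : ℕ))) •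
    v b (fun i => if i = r then 0 else 1)

/-- The map induced by the braid `λ = σ_{n-1} ⋯ σ_1`. -/
def Lam (n : ℕ) : T n →ₗ[K] T n :=
  ((List.range (n - 1)).map (fun t => Phi n (t + 1))).foldl (fun acc g => g ∘ₗ acc) LinearMap.id

/-- The Vandermonde-type matrix `B(n)`. -/
def B (n : ℕ) : Matrix (Fin n) (Fin n) K :=
  fun i j => q ^ ((i : ℤ) * (n : ℤ) * ((n : ℤ) - 1 - 2 * (j : ℤ)))

/-- `C(n) = B(n)⁻¹`. -/
def Cmat (n : ℕ) : Matrix (Fin n) (Fin n) K := (B n)⁻¹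

/-- A combinatorial string `(a_1, b_1, a_2, b_2, …, b_l, a_{l+1})`. -/
structure GString where
  l : ℕ
  a : Fin (l + 1) → ℕ
  b : Fin l → ℕ

/-- Membership of a string in `S_k` (for strands number `n`). -/
def memSk (n k : ℕ) (s : GString) : Prop :=
  (∀ i, 2 ≤ s.b i) ∧ (∑ i, (s.b i - 1)) = k ∧ ((∑ i, s.a i) + ∑ i, s.b i) = n

/-- The length of the string, computed blockwise. -/
def lenOf : (l : ℕ) → (Fin (l + 1) → ℕ) → (Fin l → ℕ) → ℕ
  | 0, a, _ => a 0
  | (l + 1), a, b => (a 0 + b 0) + lenOf l (fun i => a i.succ) (fun i => b i.succ)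

/-- The concatenation `v₀^{⊗a_1} ⊗ Θ_{b_1} ⊗ ⋯ ⊗ Θ_{b_l} ⊗ v₀^{⊗a_{l+1}}`. -/
def rawphi : (l : ℕ) → (a : Fin (l + 1) → ℕ) → (b : Fin l → ℕ) → T (lenOf l a b)
  | 0, a, _ => v0 (a 0)
  | (l + 1), a, b =>
      conc (conc (v0 (a 0)) (Theta (b 0)))
        (rawphi l (fun i => a i.succ) (fun i => b i.succ))

/-- `φ(s) ∈ T n`, the vector associated to a string `s`. -/
def phi (n : ℕ) (s : GString) : T n :=
  if h : lenOf s.l s.a s.b = n then castT h (rawphi s.l s.a s.b) else 0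


section Aux

lemma fin2_cases (a : Fin 2) : a = 0 ∨ a = 1 := by omega

lemma update2_eq_iff {n : ℕ} (i j : Fin n) (hij : i ≠ j) (β α : Fin n → Fin 2) (a b : Fin 2) :
    Function.update (Function.update β i a) j b = α ↔
      a = α i ∧ b = α j ∧ ∀ k, k ≠ i → k ≠ j → β k = α k := by
  constructor
  · intro h
    refine ⟨?_, ?_, fun k hki hkj => ?_⟩
    · have := congrFun h i
      simpa [Function.update_apply, hij] using this
    · have := congrFun h j
      simpa [Function.update_apply] using this
    · have := congrFun h k
      simpa [Function.update_apply, hki, hkj] using this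
  · rintro ⟨ha, hb, h⟩
    funext k
    by_cases hkj : k = j
    · subst hkj; simp [Function.update_apply, hb]
    by_cases hki : k = i
    · subst hki; simp [Function.update_apply, hij, hkj, ha]
    · simp [Function.update_apply, hki, hkj, h k hki hkj]

lemma phiAux_v (n : ℕ) (i j : Fin n) (hij : i ≠ j) (α : Fin n → Fin 2) :
    PhiAux n i j (v n α) = ∑ p : Fin 2 × Fin 2,
      Rmat p (α i, α j) • v n (Function.update (Function.update α i p.1) j p.2) := by
  funext β
  have hLHS : PhiAux n i j (v n α) β =
      if (∀ k, k ≠ i → k ≠ j → β k = α k) then Rmat (β i, β j) (α i, α j) else 0 := by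
    show (∑ p : Fin 2 × Fin 2, Rmat (β i, β j) p *
        v n α (Function.update (Function.update β i p.1) j p.2)) = _
    rw [Finset.sum_eq_single ((α i, α j) : Fin 2 × Fin 2)]
    · simp only [v, update2_eq_iff i j hij]
      by_cases hd : ∀ k, k ≠ i → k ≠ j → β k = α k <;> simp [hd]
    · intro p _ hp
      simp only [v, update2_eq_iff i j hij]
      rw [if_neg, mul_zero]
      rintro ⟨h1, h2, -⟩
      exact hp (Prod.ext h1 h2)
    · intro h; exact absurd (Finset.mem_univ _) h
  have hRHS : (∑ p : Fin 2 × Fin 2,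
      Rmat p (α i, α j) • v n (Function.update (Function.update α i p.1) j p.2)) β =
      if (∀ k, k ≠ i → k ≠ j → β k = α k) then Rmat (β i, β j) (α i, α j) else 0 := by
    rw [Finset.sum_apply]
    simp only [Pi.smul_apply, smul_eq_mul]
    rw [Finset.sum_eq_single ((β i, β j) : Fin 2 × Fin 2)]
    · simp only [v]
      have : (β = Function.update (Function.update α i (β i)) j (β j)) ↔
          (∀ k, k ≠ i → k ≠ j → β k = α k) := by
        rw [eq_comm, update2_eq_iff i j hij]
        constructor
        · rintro ⟨-, -, h⟩ k hki hkj; exact (h k hki hkj).symm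
        · intro h; exact ⟨rfl, rfl, fun k hki hkj => (h k hki hkj).symm⟩
      by_cases hd : ∀ k, k ≠ i → k ≠ j → β k = α k
      · rw [if_pos hd, if_pos (this.mpr hd), mul_one]
      · rw [if_neg hd, if_neg (fun hc => hd (this.mp hc)), mul_zero]
    · intro p _ hp
      simp only [v]
      rw [if_neg, mul_zero]
      intro hc
      rcases (update2_eq_iff i j hij α β p.1 p.2).mp hc.symm with ⟨h1, h2, -⟩
      exact hp (Prod.ext h1 h2)
    · intro h; exact absurd (Finset.mem_univ _) h
  rw [hLHS, ← hRHS]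

end Aux
section Aux2

lemma phiAux_v00 (n : ℕ) (i j : Fin n) (hij : i ≠ j) (α : Fin n → Fin 2)
    (hi : α i = 0) (hj : α j = 0) :
    PhiAux n i j (v n α) = q • v n α := by
  rw [phiAux_v n i j hij, hi, hj]
  have hupd : Function.update (Function.update α i (0:Fin 2)) j 0 = α := by
    funext k
    by_cases hkj : k = j
    · subst hkj; simp [Function.update_apply, hj]
    by_cases hki : k = i
    · subst hki; simp [Function.update_apply, hkj, hi]
    · simp [Function.update_apply, hkj, hki]
  simp [Fintype.sum_prod_type, Fin.sum_univ_two, Rmat, hupd]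

lemma phiAux_v10 (n : ℕ) (i j : Fin n) (hij : i ≠ j) (α : Fin n → Fin 2)
    (hi : α i = 1) (hj : α j = 0) :
    PhiAux n i j (v n α) = v n (Function.update (Function.update α i 0) j 1) := by
  rw [phiAux_v n i j hij, hi, hj]
  simp [Fintype.sum_prod_type, Fin.sum_univ_two, Rmat]

lemma phiAux_v01 (n : ℕ) (i j : Fin n) (hij : i ≠ j) (α : Fin n → Fin 2)
    (hi : α i = 0) (hj : α j = 1) :
    PhiAux n i j (v n α) =
      v n (Function.update (Function.update α i 1) j 0) + (q - q⁻¹) • v n α := by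
  rw [phiAux_v n i j hij, hi, hj]
  have hupd : Function.update (Function.update α i (0:Fin 2)) j 1 = α := by
    funext k
    by_cases hkj : k = j
    · subst hkj; simp [Function.update_apply, hj]
    by_cases hki : k = i
    · subst hki; simp [Function.update_apply, hkj, hi]
    · simp [Function.update_apply, hkj, hki]
  simp [Fintype.sum_prod_type, Fin.sum_univ_two, Rmat, hupd]
  abel

end Aux2
section Aux3

lemma Phi_eq (n t : ℕ) (ht : 0 < t) (htn : t < n) :
    Phi n t = PhiAux n ⟨t-1, by omega⟩ ⟨t, htn⟩ := dif_pos ⟨ht, htn⟩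

lemma Phi_w_far (n t i : ℕ) (ht : 0 < t) (htn : t < n) (h1 : i ≠ t) (h2 : i ≠ t + 1) :
    Phi n t (w n i) = q • w n i := by
  rw [Phi_eq n t ht htn]
  exact phiAux_v00 n _ _ (Fin.ne_of_val_ne (by omega : t - 1 ≠ t))
    (fun j => if (j:ℕ)+1 = i then 1 else 0)
    (by show (if (t-1)+1 = i then (1:Fin 2) else 0) = 0; rw [if_neg (by omega)])
    (by show (if t+1 = i then (1:Fin 2) else 0) = 0; rw [if_neg (by omega)])

lemma Phi_w_t (n t : ℕ) (ht : 0 < t) (htn : t < n) :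
    Phi n t (w n t) = w n (t+1) := by
  rw [Phi_eq n t ht htn]
  unfold w
  rw [phiAux_v10 n ⟨t-1, by omega⟩ ⟨t, htn⟩ (Fin.ne_of_val_ne (by omega : t - 1 ≠ t))
    (fun j => if (j:ℕ)+1 = t then 1 else 0)
    (by show (if (t-1)+1 = t then (1:Fin 2) else 0) = 1; rw [if_pos (by omega)])
    (by show (if t+1 = t then (1:Fin 2) else 0) = 0; rw [if_neg (by omega)])]
  refine congrArg (v n) (funext fun k => ?_)
  simp only [Function.update_apply]
  by_cases hkj : (k:ℕ) = t
  · rw [if_pos (Fin.ext hkj : k = ⟨t, htn⟩), if_pos (by omega : (k:ℕ)+1 = t+1)]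
  · rw [if_neg (fun h => hkj (congrArg Fin.val h) : ¬ k = ⟨t, htn⟩)]
    by_cases hki : (k:ℕ) = t-1
    · rw [if_pos (Fin.ext hki : k = ⟨t-1, by omega⟩), if_neg (by omega : ¬ ((k:ℕ)+1 = t+1))]
    · rw [if_neg (fun h => hki (congrArg Fin.val h) : ¬ k = ⟨t-1, by omega⟩),
        if_neg (by omega : ¬ ((k:ℕ)+1 = t)), if_neg (by omega : ¬ ((k:ℕ)+1 = t+1))]

lemma Phi_w_t1 (n t : ℕ) (ht : 0 < t) (htn : t < n) :
    Phi n t (w n (t+1)) = w n t + (q - q⁻¹) • w n (t+1) := by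
  rw [Phi_eq n t ht htn]
  unfold w
  rw [phiAux_v01 n ⟨t-1, by omega⟩ ⟨t, htn⟩ (Fin.ne_of_val_ne (by omega : t - 1 ≠ t))
    (fun j => if (j:ℕ)+1 = t+1 then 1 else 0)
    (by show (if (t-1)+1 = t+1 then (1:Fin 2) else 0) = 0; rw [if_neg (by omega)])
    (by show (if t+1 = t+1 then (1:Fin 2) else 0) = 1; rw [if_pos rfl])]
  congr 1
  refine congrArg (v n) (funext fun k => ?_)
  simp only [Function.update_apply]
  by_cases hkj : (k:ℕ) = t
  · rw [if_pos (Fin.ext hkj : k = ⟨t, htn⟩), if_neg (by omega : ¬ ((k:ℕ)+1 = t))]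
  · rw [if_neg (fun h => hkj (congrArg Fin.val h) : ¬ k = ⟨t, htn⟩)]
    by_cases hki : (k:ℕ) = t-1
    · rw [if_pos (Fin.ext hki : k = ⟨t-1, by omega⟩), if_pos (by omega : (k:ℕ)+1 = t)]
    · rw [if_neg (fun h => hki (congrArg Fin.val h) : ¬ k = ⟨t-1, by omega⟩),
        if_neg (by omega : ¬ ((k:ℕ)+1 = t+1)), if_neg (by omega : ¬ ((k:ℕ)+1 = t))]

end Aux3
section Aux4

lemma q_ne_zero : (q : K) ≠ 0 := RatFunc.X_ne_zero

section ModHelp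
variable {M : Type*} [AddCommGroup M] [Module K M]

lemma smul_L1 (x y : M) : -(q • x) + q⁻¹ • (q • y) = q • (-x + q⁻¹ • y) := by
  simp [smul_add, smul_smul, inv_mul_cancel₀ q_ne_zero, mul_inv_cancel₀ q_ne_zero]

lemma smul_L2 (x y z : M) :
    -(x + (q - q⁻¹) • y) + q⁻¹ • (q • z) = (-x + q⁻¹ • y) + q • (-y + q⁻¹ • z) := by
  simp only [smul_add, smul_smul, smul_neg, sub_smul, neg_add_rev, neg_sub,
    inv_mul_cancel₀ q_ne_zero, mul_inv_cancel₀ q_ne_zero, one_smul]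
  abel

lemma smul_L3 (a b c : M) :
    -(q • a) + q⁻¹ • c + q • (-c + q⁻¹ • (b + (q - q⁻¹) • c)) = q • (-a + q⁻¹ • b) := by
  simp only [smul_add, smul_smul, smul_neg, sub_smul, neg_add_rev, neg_sub,
    inv_mul_cancel₀ q_ne_zero, mul_inv_cancel₀ q_ne_zero, one_smul, mul_sub,
    mul_inv_cancel_left₀ q_ne_zero]
  abel

lemma smul_L4 (a b : M) :
    -b + q⁻¹ • (a + (q - q⁻¹) • b) = q ^ (-1 : ℤ) • a - q ^ (-2 : ℤ) • b := by
  have h2 : (q : K) ^ (-2 : ℤ) = q⁻¹ * q⁻¹ := by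
    rw [zpow_neg, zpow_two, mul_inv]
  rw [zpow_neg_one, h2, smul_add, smul_smul,
    show q⁻¹ * (q - q⁻¹) = 1 - q⁻¹ * q⁻¹ by rw [mul_sub, inv_mul_cancel₀ q_ne_zero],
    sub_smul, one_smul]
  abel

end ModHelp

lemma Phi_e_far (n t i : ℕ) (ht : 0 < t) (htn : t < n) (h : t + 1 < i ∨ i + 1 < t) :
    Phi n t (e n i) = q • e n i := by
  simp only [e, map_add, map_neg, map_smul,
    Phi_w_far n t i ht htn (by omega) (by omega),
    Phi_w_far n t (i+1) ht htn (by omega) (by omega)]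
  exact smul_L1 _ _

lemma Phi_e_next (n t : ℕ) (ht : 0 < t) (htn : t < n) :
    Phi n t (e n (t+1)) = e n t + q • e n (t+1) := by
  simp only [e, map_add, map_neg, map_smul, Phi_w_t1 n t ht htn,
    Phi_w_far n t (t+1+1) ht htn (by omega) (by omega)]
  exact smul_L2 _ _ _

lemma Phi_e_comb (n t : ℕ) (ht : 2 ≤ t) (htn : t < n) :
    Phi n t (e n (t-1) + q • e n t) = q • e n (t-1) := by
  have h1 : t - 1 + 1 = t := by omega
  simp only [e, map_add, map_neg, map_smul, h1,
    Phi_w_far n t (t-1) (by omega) htn (by omega) (by omega),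
    Phi_w_t n t (by omega) htn, Phi_w_t1 n t (by omega) htn]
  exact smul_L3 _ _ _

lemma Phi_e_one (n : ℕ) (hn : 2 ≤ n) :
    Phi n 1 (e n 1) = q ^ (-1 : ℤ) • w n 1 - q ^ (-2 : ℤ) • w n 2 := by
  simp only [e, map_add, map_neg, map_smul, Phi_w_t n 1 one_pos (by omega),
    Phi_w_t1 n 1 one_pos (by omega)]
  exact smul_L4 _ _

def LamK (n k : ℕ) : T n →ₗ[K] T n :=
  ((List.range k).map (fun t => Phi n (t + 1))).foldl (fun acc g => g ∘ₗ acc) LinearMap.id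

lemma LamK_succ (n k : ℕ) : LamK n (k+1) = Phi n (k+1) ∘ₗ LamK n k := by
  unfold LamK
  rw [List.range_succ, List.map_append, List.foldl_append]
  rfl

lemma Lam_eq (n : ℕ) : Lam n = LamK n (n-1) := rfl

end Aux4
section Aux5

lemma LamK_zero_apply (n : ℕ) (x : T n) : LamK n 0 x = x := rfl

lemma LamK_e_one (n : ℕ) (hn : 2 ≤ n) :
    ∀ k, 1 ≤ k → k ≤ n - 1 →
      LamK n k (e n 1) = q ^ ((k:ℤ) - 2) • w n 1 - q ^ (-2:ℤ) • w n (k+1) := by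
  intro k
  induction k with
  | zero => omega
  | succ k ih =>
    intro h1 h2
    by_cases hk : k = 0
    · subst hk
      rw [LamK_succ n 0, LinearMap.comp_apply, LamK_zero_apply, Phi_e_one n hn]
      norm_num
    · rw [LamK_succ, LinearMap.comp_apply, ih (by omega) (by omega), map_sub, map_smul,
        map_smul, Phi_w_far n (k+1) 1 (by omega) (by omega) (by omega) (by omega),
        Phi_w_t n (k+1) (by omega) (by omega), smul_smul]
      have : q ^ ((k:ℤ) - 2) * q = q ^ (((k+1:ℕ):ℤ) - 2) := by
        rw [← zpow_add_one₀ q_ne_zero]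
        congr 1
        push_cast; ring
      rw [this]

lemma LamK_e_a (n i : ℕ) (h2 : 2 ≤ i) (hin : i ≤ n - 1) :
    ∀ k, k ≤ i - 2 → LamK n k (e n i) = q ^ k • e n i := by
  intro k
  induction k with
  | zero => intro _; rw [LamK_zero_apply, pow_zero, one_smul]
  | succ k ih =>
    intro hk
    rw [LamK_succ, LinearMap.comp_apply, ih (by omega), map_smul,
      Phi_e_far n (k+1) i (by omega) (by omega) (Or.inl (by omega)), smul_smul, ← pow_succ]

lemma LamK_e_b (n i : ℕ) (h2 : 2 ≤ i) (hin : i ≤ n - 1) (hn : 2 ≤ n) :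
    LamK n (i-1) (e n i) = q ^ (i-2) • (e n (i-1) + q • e n i) := by
  have e1 : i - 1 = (i-2) + 1 := by omega
  rw [e1, LamK_succ, LinearMap.comp_apply, LamK_e_a n i h2 hin (i-2) le_rfl, map_smul]
  congr 1
  have e2 : i - 2 + 1 = i - 1 := by omega
  rw [e2]
  have h := Phi_e_next n (i-1) (by omega) (by omega)
  rw [show i - 1 + 1 = i from by omega] at h
  rw [h]

lemma LamK_e_c (n i : ℕ) (h2 : 2 ≤ i) (hin : i ≤ n - 1) (hn : 2 ≤ n) :
    ∀ k, i ≤ k → k ≤ n - 1 → LamK n k (e n i) = q ^ (k-1) • e n (i-1) := by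
  intro k hik hkn
  induction k, hik using Nat.le_induction with
  | base =>
    rw [show i = (i-1) + 1 from by omega, LamK_succ, LinearMap.comp_apply,
      show i - 1 + 1 = i from by omega, LamK_e_b n i h2 hin hn, map_smul,
      Phi_e_comb n i h2 (by omega), smul_smul, ← pow_succ,
      show i - 2 + 1 = i - 1 from by omega]
  | succ k hik ih =>
    rw [LamK_succ, LinearMap.comp_apply, ih (by omega), map_smul,
      Phi_e_far n (k+1) (i-1) (by omega) (by omega) (Or.inr (by omega)), smul_smul,
      ← pow_succ, show k - 1 + 1 = k + 1 - 1 from by omega]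

end Aux5

theorem stmt11 (n : ℕ) (hn : 2 ≤ n) :
    Lam n (e n 1) = -∑ j : Fin (n - 1), q ^ ((n : ℤ) - 2 - (((j : ℕ) : ℤ) + 1)) • e n ((j : ℕ) + 1) ∧
    ∀ i : ℕ, 2 ≤ i → i ≤ n - 1 → Lam n (e n i) = q ^ (n - 2) • e n (i - 1) := by
  constructor
  · rw [Lam_eq, LamK_e_one n hn (n-1) (by omega) le_rfl]
    set f : ℕ → T n := fun m => q ^ ((n:ℤ) - 3 - (m:ℤ)) • w n (m+1) with hfdef
    have key : ∀ m : ℕ, q ^ ((n:ℤ) - 2 - ((m:ℤ) + 1)) • e n (m + 1) = f (m+1) - f m := by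
      intro m
      simp only [hfdef, e, smul_add, smul_neg, smul_smul]
      have hc : (n:ℤ) - 2 - ((m:ℤ) + 1) = (n:ℤ) - 3 - (m:ℤ) := by ring
      rw [hc]
      have hc2 : q ^ ((n:ℤ) - 3 - (m:ℤ)) * q⁻¹ = q ^ ((n:ℤ) - 3 - ((m+1:ℕ):ℤ)) := by
        rw [← zpow_neg_one, ← zpow_add₀ q_ne_zero]
        congr 1
        push_cast; ring
      rw [hc2]
      abel
    have hsum : (∑ j : Fin (n-1), q ^ ((n:ℤ) - 2 - (((j:ℕ):ℤ) + 1)) • e n ((j:ℕ) + 1))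
        = f (n-1) - f 0 := by
      rw [Fin.sum_univ_eq_sum_range
        (fun m => q ^ ((n:ℤ) - 2 - ((m:ℤ) + 1)) • e n (m + 1)) (n-1),
        Finset.sum_congr rfl (fun m _ => key m), Finset.sum_range_sub f]
    rw [hsum, neg_sub]
    have e0 : f 0 = q ^ ((((n-1:ℕ)):ℤ) - 2) • w n 1 := by
      show q ^ ((n:ℤ) - 3 - ((0:ℕ):ℤ)) • w n (0+1) = _
      rw [show ((n:ℤ) - 3 - ((0:ℕ):ℤ)) = ((((n-1:ℕ)):ℤ) - 2) from by omega]
    have e1 : f (n-1) = q ^ (-2:ℤ) • w n (n-1+1) := by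
      show q ^ ((n:ℤ) - 3 - ((n-1:ℕ):ℤ)) • w n ((n-1)+1) = _
      rw [show ((n:ℤ) - 3 - ((n-1:ℕ):ℤ)) = (-2:ℤ) from by omega]
    rw [e0, e1]
  · intro i hi2 hin
    rw [Lam_eq, LamK_e_c n i hi2 hin hn (n-1) hin le_rfl,
      show n - 1 - 1 = n - 2 from by omega]


end
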